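/- Let L > 0 and λ > 0. Let p : ℝ × ℝ → ℝ be a C² function such that p(0,y) = 0 for all y ∈ [0,L], and such that for all x ∈ [0,L]: 2·(d/dx)[p(x,x)] + p_x(x,x) + p_y(x,x) = 0 and (d²/dx²)[p(x,x)] + (d/dx)[p_x(x,x)] + p_{xx}(x,x) − p_{yy}(x,x) = λ. Then p(x,x) = 0 for all x ∈ [0,L] and p_x(x,x) = (λ/3)·x for all x ∈ [0,L]. -/

import Mathlib

/-- Diagonal boundary conditions of the observer kernel: if `p` is `C²`, vanishes on
`{0} × [0,L]`, and its diagonal traces satisfy `2 (d/dx)[p(x,x)] + p_x(x,x) + p_y(x,x) = 0`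
and `(d²/dx²)[p(x,x)] + (d/dx)[p_x(x,x)] + p_xx(x,x) - p_yy(x,x) = λ` on `[0,L]`, then
`p(x,x) = 0` and `p_x(x,x) = (λ/3) x` on `[0,L]`. -/
theorem observer_kernel_diagonal_conditions
    (L lam : ℝ) (hL : 0 < L) (hlam : 0 < lam)
    (p : ℝ → ℝ → ℝ) (hp : ContDiff ℝ 2 (Function.uncurry p))
    (hp0 : ∀ y ∈ Set.Icc (0:ℝ) L, p 0 y = 0)
    (hdiag1 : ∀ x ∈ Set.Icc (0:ℝ) L,
      2 * deriv (fun s => p s s) x + deriv (fun s => p s x) x + deriv (fun r => p x r) x = 0)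
    (hdiag2 : ∀ x ∈ Set.Icc (0:ℝ) L,
      iteratedDeriv 2 (fun s => p s s) x
        + deriv (fun s => deriv (fun a => p a s) s) x
        + iteratedDeriv 2 (fun s => p s x) x
        - iteratedDeriv 2 (fun r => p x r) x = lam) :
    (∀ x ∈ Set.Icc (0:ℝ) L, p x x = 0) ∧
    (∀ x ∈ Set.Icc (0:ℝ) L, deriv (fun s => p s x) x = lam / 3 * x) := by
  have hF1 : Differentiable ℝ (Function.uncurry p) := hp.differentiable (by norm_num)
  set F := Function.uncurry p with hFdef
  set f1 := fderiv ℝ F with hf1def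
  have hf1c : ContDiff ℝ 1 f1 := hp.fderiv_right (by norm_num)
  have hf1d : Differentiable ℝ f1 := hf1c.differentiable (by norm_num)
  set f2 := fderiv ℝ f1 with hf2def
  -- symmetry of the second derivative
  have hsymm : ∀ (q : ℝ × ℝ) (v w : ℝ × ℝ), f2 q v w = f2 q w v := fun q v w =>
    second_derivative_symmetric (fun y => (hF1 y).hasFDerivAt) ((hf1d q).hasFDerivAt) v w
  -- first-order chain rule
  have hD1 : ∀ (c : ℝ → ℝ × ℝ) (d : ℝ × ℝ) (a : ℝ), HasDerivAt c d a →
      HasDerivAt (fun s => F (c s)) (f1 (c a) d) a := by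
    intro c d a hc
    exact (hF1 (c a)).hasFDerivAt.comp_hasDerivAt a hc
  -- second-order chain rule
  have hD2 : ∀ (c : ℝ → ℝ × ℝ) (d : ℝ × ℝ) (a : ℝ), HasDerivAt c d a → ∀ v : ℝ × ℝ,
      HasDerivAt (fun s => f1 (c s) v) (f2 (c a) d v) a := by
    intro c d a hc v
    have h1 : HasDerivAt (fun s => f1 (c s)) (f2 (c a) d) a :=
      (hf1d (c a)).hasFDerivAt.comp_hasDerivAt a hc
    simpa using h1.clm_apply (hasDerivAt_const a v)
  -- basic curves
  have hcurve1 : ∀ b a : ℝ, HasDerivAt (fun s => (s, b)) ((1:ℝ), (0:ℝ)) a := fun b a =>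
    (hasDerivAt_id a).prodMk (hasDerivAt_const a b)
  have hcurve2 : ∀ b a : ℝ, HasDerivAt (fun r => (b, r)) ((0:ℝ), (1:ℝ)) a := fun b a =>
    (hasDerivAt_const a b).prodMk (hasDerivAt_id a)
  have hcurve3 : ∀ a : ℝ, HasDerivAt (fun s => (s, s)) ((1:ℝ), (1:ℝ)) a := fun a =>
    (hasDerivAt_id a).prodMk (hasDerivAt_id a)
  -- first derivatives
  have hL1 : ∀ a b : ℝ, HasDerivAt (fun s => p s b) (f1 (a, b) (1, 0)) a := fun a b =>
    hD1 _ _ a (hcurve1 b a)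
  have hL2 : ∀ a b : ℝ, HasDerivAt (fun r => p a r) (f1 (a, b) (0, 1)) b := fun a b =>
    hD1 _ _ b (hcurve2 a b)
  have hL3 : ∀ a : ℝ, HasDerivAt (fun s => p s s) (f1 (a, a) (1, 1)) a := fun a =>
    hD1 _ _ a (hcurve3 a)
  -- computation of all the terms appearing in the hypotheses
  have e1 : ∀ x : ℝ, deriv (fun s => p s s) x = f1 (x, x) (1, 1) := fun x => (hL3 x).deriv
  have e2 : ∀ x b : ℝ, deriv (fun s => p s b) x = f1 (x, b) (1, 0) := fun x b => (hL1 x b).deriv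
  have e3 : ∀ x b : ℝ, deriv (fun r => p b r) x = f1 (b, x) (0, 1) := fun x b => (hL2 b x).deriv
  have e4 : ∀ x : ℝ, iteratedDeriv 2 (fun s => p s s) x = f2 (x, x) (1, 1) (1, 1) := by
    intro x
    rw [show (2:ℕ) = 1 + 1 from rfl, iteratedDeriv_succ, iteratedDeriv_one]
    have : deriv (fun s => p s s) = fun s => f1 (s, s) (1, 1) := funext fun s => (hL3 s).deriv
    rw [this]
    exact (hD2 _ _ x (hcurve3 x) (1, 1)).deriv
  have e5 : ∀ x : ℝ, deriv (fun s => deriv (fun a => p a s) s) x = f2 (x, x) (1, 1) (1, 0) := by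
    intro x
    have : (fun s => deriv (fun a => p a s) s) = fun s => f1 (s, s) (1, 0) :=
      funext fun s => (hL1 s s).deriv
    rw [this]
    exact (hD2 _ _ x (hcurve3 x) (1, 0)).deriv
  have e6 : ∀ x b : ℝ, iteratedDeriv 2 (fun s => p s b) x = f2 (x, b) (1, 0) (1, 0) := by
    intro x b
    rw [show (2:ℕ) = 1 + 1 from rfl, iteratedDeriv_succ, iteratedDeriv_one]
    have : deriv (fun s => p s b) = fun s => f1 (s, b) (1, 0) := funext fun s => (hL1 s b).deriv
    rw [this]
    exact (hD2 _ _ x (hcurve1 b x) (1, 0)).deriv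
  have e7 : ∀ x b : ℝ, iteratedDeriv 2 (fun r => p b r) x = f2 (b, x) (0, 1) (0, 1) := by
    intro x b
    rw [show (2:ℕ) = 1 + 1 from rfl, iteratedDeriv_succ, iteratedDeriv_one]
    have : deriv (fun r => p b r) = fun r => f1 (b, r) (0, 1) := funext fun r => (hL2 b r).deriv
    rw [this]
    exact (hD2 _ _ x (hcurve2 b x) (0, 1)).deriv
  have hvadd : ((1:ℝ), (1:ℝ)) = ((1:ℝ), (0:ℝ)) + ((0:ℝ), (1:ℝ)) := by simp
  -- hdiag1 rewritten: f1 (x,x) (1,1) = 0 on [0,L]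
  have key1 : ∀ x ∈ Set.Icc (0:ℝ) L, f1 (x, x) (1, 1) = 0 := by
    intro x hx
    have h := hdiag1 x hx
    rw [e1, e2, e3] at h
    have hexp : f1 (x, x) (1, 1) = f1 (x, x) (1, 0) + f1 (x, x) (0, 1) := by
      simpa using map_add (f1 (x, x)) ((1:ℝ), (0:ℝ)) ((0:ℝ), (1:ℝ))
    rw [hexp] at h ⊢
    linarith
  -- from hdiag1 at x = 0 and hp0: f1 (0,0) (1,0) = 0
  have hv0 : f1 ((0:ℝ), (0:ℝ)) (0, 1) = 0 := by
    have udw : UniqueDiffWithinAt ℝ (Set.Ici (0:ℝ)) 0 := uniqueDiffOn_Ici 0 0 Set.self_mem_Ici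
    have h1 : HasDerivWithinAt (fun r => p 0 r) (f1 ((0:ℝ), (0:ℝ)) (0, 1)) (Set.Ici 0) 0 :=
      (hL2 0 0).hasDerivWithinAt
    have hev : ∀ᶠ r in nhdsWithin 0 (Set.Ici (0:ℝ)), p 0 r = 0 := by
      filter_upwards [Icc_mem_nhdsGE hL] with r hr using hp0 r hr
    have h2 : HasDerivWithinAt (fun r => p 0 r) 0 (Set.Ici 0) 0 :=
      (hasDerivWithinAt_const (0:ℝ) (Set.Ici (0:ℝ)) (0:ℝ)).congr_of_eventuallyEq hev
        (hp0 0 ⟨le_rfl, hL.le⟩)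
    have := h1.derivWithin udw
    rw [h2.derivWithin udw] at this
    exact this.symm
  have hu0 : f1 ((0:ℝ), (0:ℝ)) (1, 0) = 0 := by
    have h := key1 0 ⟨le_rfl, hL.le⟩
    have hexp : f1 ((0:ℝ), (0:ℝ)) (1, 1) = f1 ((0:ℝ), (0:ℝ)) (1, 0) + f1 ((0:ℝ), (0:ℝ)) (0, 1) := by
      simpa using map_add (f1 ((0:ℝ), (0:ℝ))) ((1:ℝ), (0:ℝ)) ((0:ℝ), (1:ℝ))
    rw [hexp, hv0] at h
    simpa using h
  -- hdiag2 rewritten: f2 (x,x) (1,1) (1,0) = lam / 3 on [0,L]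
  have key2 : ∀ x ∈ Set.Icc (0:ℝ) L, f2 (x, x) (1, 1) (1, 0) = lam / 3 := by
    intro x hx
    have h := hdiag2 x hx
    rw [e4, e5, e6, e7] at h
    have hA : f2 (x, x) (1, 1) (1, 1)
        = f2 (x, x) (1, 1) (1, 0) + f2 (x, x) (1, 1) (0, 1) := by
      simpa using map_add (f2 (x, x) (1, 1)) ((1:ℝ), (0:ℝ)) ((0:ℝ), (1:ℝ))
    have hB : f2 (x, x) (1, 1) (0, 1)
        = f2 (x, x) (1, 0) (0, 1) + f2 (x, x) (0, 1) (0, 1) := by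
      have h := congrArg (fun T : ℝ × ℝ →L[ℝ] ℝ => T ((0:ℝ), (1:ℝ)))
        (map_add (f2 (x, x)) ((1:ℝ), (0:ℝ)) ((0:ℝ), (1:ℝ)))
      simpa using h
    have hC : f2 (x, x) (1, 1) (1, 0)
        = f2 (x, x) (1, 0) (1, 0) + f2 (x, x) (0, 1) (1, 0) := by
      have h := congrArg (fun T : ℝ × ℝ →L[ℝ] ℝ => T ((1:ℝ), (0:ℝ)))
        (map_add (f2 (x, x)) ((1:ℝ), (0:ℝ)) ((0:ℝ), (1:ℝ)))
      simpa using h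
    have hS : f2 (x, x) (1, 0) (0, 1) = f2 (x, x) (0, 1) (1, 0) := hsymm _ _ _
    rw [hA, hB, hC] at h
    rw [hC]
    linarith
  -- first conclusion: p x x = 0 on [0,L]
  constructor
  · have hdiff : DifferentiableOn ℝ (fun s => p s s) (Set.Icc 0 L) := fun x _ =>
      ((hL3 x).differentiableAt).differentiableWithinAt
    have hderiv : ∀ x ∈ Set.Ico (0:ℝ) L, derivWithin (fun s => p s s) (Set.Icc 0 L) x = 0 := by
      intro x hx
      have hxI : x ∈ Set.Icc (0:ℝ) L := ⟨hx.1, hx.2.le⟩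
      rw [(hL3 x).hasDerivWithinAt.derivWithin ((uniqueDiffOn_Icc hL) x hxI)]
      exact key1 x hxI
    intro x hx
    have := constant_of_derivWithin_zero hdiff hderiv x hx
    simpa [hp0 0 ⟨le_rfl, hL.le⟩] using this
  -- second conclusion
  · have hderivw : ∀ x : ℝ, HasDerivAt (fun s => f1 (s, s) (1, 0) - lam / 3 * s)
        (f2 (x, x) (1, 1) (1, 0) - lam / 3) x := by
      intro x
      have h2 : HasDerivAt (fun s : ℝ => lam / 3 * s) (lam / 3) x := by
        simpa using (hasDerivAt_id x).const_mul (lam / 3)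
      exact (hD2 _ _ x (hcurve3 x) (1, 0)).sub h2
    have hdiff : DifferentiableOn ℝ (fun s => f1 (s, s) (1, 0) - lam / 3 * s) (Set.Icc 0 L) :=
      fun x _ => ((hderivw x).differentiableAt).differentiableWithinAt
    have hderiv : ∀ x ∈ Set.Ico (0:ℝ) L,
        derivWithin (fun s => f1 (s, s) (1, 0) - lam / 3 * s) (Set.Icc 0 L) x = 0 := by
      intro x hx
      have hxI : x ∈ Set.Icc (0:ℝ) L := ⟨hx.1, hx.2.le⟩
      rw [(hderivw x).hasDerivWithinAt.derivWithin ((uniqueDiffOn_Icc hL) x hxI)]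
      rw [key2 x hxI]; ring
    intro x hx
    have := constant_of_derivWithin_zero hdiff hderiv x hx
    rw [e2]
    simp only [hu0] at this
    linarith [this]
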